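/- Let a, b, p, c, d, q be integers. The quotient of ℤ³ by the subgroup generated by (a, b, p) and (c, d, q) is isomorphic to ℤ if and only if gcd(gcd(ad − bc, aq − cp), bq − dp) = 1. -/

import Mathlib

/-- cross product on ℤ³ -/
def cr (u v : ℤ × ℤ × ℤ) : ℤ × ℤ × ℤ :=
  (u.2.1 * v.2.2 - u.2.2 * v.2.1, u.2.2 * v.1 - u.1 * v.2.2, u.1 * v.2.1 - u.2.1 * v.1)

lemma cr_smul (s t s' t' : ℤ) (r₁ r₂ : ℤ × ℤ × ℤ) :
    cr (s • r₁ + t • r₂) (s' • r₁ + t' • r₂) = (s * t' - s' * t) • cr r₁ r₂ := by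
  obtain ⟨x, y, z⟩ := r₁
  obtain ⟨x', y', z'⟩ := r₂
  simp only [cr, Prod.smul_mk, Prod.mk_add_mk, smul_eq_mul, Prod.mk.injEq]
  refine ⟨by ring, by ring, by ring⟩

/-- the "dot with the cross product of the rows" homomorphism -/
def dotn (a b p c d q : ℤ) : (ℤ × ℤ × ℤ) →+ ℤ where
  toFun x := x.1 * (b * q - d * p) + x.2.1 * (c * p - a * q) + x.2.2 * (a * d - b * c)
  map_zero' := by simp
  map_add' x y := by obtain ⟨x1,x2,x3⟩ := x; obtain ⟨y1,y2,y3⟩ := y; simp; ring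

lemma bwd (a b p c d q e1 e2 e3 : ℤ)
    (hb : e1 * (a * d - b * c) + e2 * (a * q - c * p) + e3 * (b * q - d * p) = 1) :
    Nonempty (((ℤ × ℤ × ℤ) ⧸
        AddSubgroup.closure {((a, b, p) : ℤ × ℤ × ℤ), ((c, d, q) : ℤ × ℤ × ℤ)}) ≃+ ℤ) := by
  set H := AddSubgroup.closure {((a, b, p) : ℤ × ℤ × ℤ), ((c, d, q) : ℤ × ℤ × ℤ)} with hH
  have hker : ∀ x ∈ H, dotn a b p c d q x = 0 := by
    intro x hx
    have : H ≤ (dotn a b p c d q).ker := by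
      rw [hH, AddSubgroup.closure_le]
      rintro x (rfl | rfl) <;>
        simp only [SetLike.mem_coe, AddMonoidHom.mem_ker, dotn, AddMonoidHom.coe_mk,
          ZeroHom.coe_mk] <;> ring
    exact this hx
  set ψ := QuotientAddGroup.lift H (dotn a b p c d q) hker with hψ
  have hmk : ∀ x : ℤ × ℤ × ℤ, ψ (QuotientAddGroup.mk x) = dotn a b p c d q x :=
    fun x => rfl
  have hinj : Function.Injective ψ := by
    rw [injective_iff_map_eq_zero]
    intro g hg
    induction g using QuotientAddGroup.induction_on with
    | H x =>
      obtain ⟨x1, x2, x3⟩ := x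
      rw [hmk] at hg
      simp only [dotn, AddMonoidHom.coe_mk, ZeroHom.coe_mk] at hg
      rw [QuotientAddGroup.eq_zero_iff, hH]
      rw [AddSubgroup.mem_closure_pair]
      refine ⟨e1 * (x1 * d - x2 * c) + e2 * (x1 * q - x3 * c) + e3 * (x2 * q - x3 * d),
        e1 * (a * x2 - b * x1) + e2 * (a * x3 - p * x1) + e3 * (b * x3 - p * x2), ?_⟩
      simp only [Prod.smul_mk, Prod.mk_add_mk, smul_eq_mul, Prod.mk.injEq]
      refine ⟨?_, ?_, ?_⟩
      · linear_combination x1 * hb - e3 * hg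
      · linear_combination x2 * hb + e2 * hg
      · linear_combination x3 * hb - e1 * hg
  have hsurj : Function.Surjective ψ := by
    intro z
    refine ⟨QuotientAddGroup.mk (z * e3, z * (-e2), z * e1), ?_⟩
    rw [hmk]
    simp only [dotn, AddMonoidHom.coe_mk, ZeroHom.coe_mk]
    linear_combination z * hb
  exact ⟨AddEquiv.ofBijective ψ ⟨hinj, hsurj⟩⟩

lemma fwd (a b p c d q : ℤ)
    (h : Nonempty (((ℤ × ℤ × ℤ) ⧸
        AddSubgroup.closure {((a, b, p) : ℤ × ℤ × ℤ), ((c, d, q) : ℤ × ℤ × ℤ)}) ≃+ ℤ)) :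
    Int.gcd (Int.gcd (a * d - b * c) (a * q - c * p)) (b * q - d * p) = 1 := by
  obtain ⟨e⟩ := h
  set H := AddSubgroup.closure {((a, b, p) : ℤ × ℤ × ℤ), ((c, d, q) : ℤ × ℤ × ℤ)} with hH
  set φ : (ℤ × ℤ × ℤ) →+ ℤ := e.toAddMonoidHom.comp (QuotientAddGroup.mk' H) with hφ
  set w1 := φ (1, 0, 0) with hw1
  set w2 := φ (0, 1, 0) with hw2
  set w3 := φ (0, 0, 1) with hw3
  have hlin : ∀ x y z : ℤ, φ (x, y, z) = x * w1 + y * w2 + z * w3 := by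
    intro x y z
    have hx : ((x, y, z) : ℤ × ℤ × ℤ)
        = x • ((1, 0, 0) : ℤ × ℤ × ℤ) + y • (0, 1, 0) + z • (0, 0, 1) := by
      simp only [Prod.smul_mk, Prod.mk_add_mk, smul_eq_mul, Prod.mk.injEq]
      refine ⟨by ring, by ring, by ring⟩
    rw [hx, map_add, map_add, map_zsmul, map_zsmul, map_zsmul, smul_eq_mul, smul_eq_mul,
      smul_eq_mul, hw1, hw2, hw3]
  have hmem : ∀ x : ℤ × ℤ × ℤ, x ∈ H → φ x = 0 := by
    intro x hx
    have h0 : QuotientAddGroup.mk' H x = 0 := (QuotientAddGroup.eq_zero_iff x).mpr hx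
    simp only [hφ, AddMonoidHom.comp_apply, h0, map_zero, AddEquiv.coe_toAddMonoidHom]
  have hr1 : a * w1 + b * w2 + p * w3 = 0 := by
    rw [← hlin]; exact hmem _ (AddSubgroup.subset_closure (Set.mem_insert _ _))
  have hr2 : c * w1 + d * w2 + q * w3 = 0 := by
    rw [← hlin]
    exact hmem _ (AddSubgroup.subset_closure (Set.mem_insert_of_mem _ rfl))
  have hkerφ : ∀ x : ℤ × ℤ × ℤ, φ x = 0 → x ∈ H := by
    intro x hx
    have h0 : QuotientAddGroup.mk' H x = 0 := by
      apply e.injective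
      rw [map_zero]
      exact hx
    exact (QuotientAddGroup.eq_zero_iff x).mp h0
  have hsol : ∀ x1 x2 x3 : ℤ, x1 * w1 + x2 * w2 + x3 * w3 = 0 →
      ∃ s t : ℤ, s • ((a, b, p) : ℤ × ℤ × ℤ) + t • ((c, d, q) : ℤ × ℤ × ℤ) = (x1, x2, x3) := by
    intro x1 x2 x3 hx
    have hmem2 := hkerφ (x1, x2, x3) (by rw [hlin]; exact hx)
    rw [hH, AddSubgroup.mem_closure_pair] at hmem2
    exact hmem2
  obtain ⟨s1, t1, hA1⟩ := hsol 0 w3 (-w2) (by ring)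
  obtain ⟨s2, t2, hA2⟩ := hsol (-w3) 0 w1 (by ring)
  obtain ⟨s3, t3, hA3⟩ := hsol w2 (-w1) 0 (by ring)
  obtain ⟨v, hv⟩ := QuotientAddGroup.mk'_surjective H (e.symm 1)
  obtain ⟨v1, v2, v3⟩ := v
  have hvw : v1 * w1 + v2 * w2 + v3 * w3 = 1 := by
    rw [← hlin]
    show e.toAddMonoidHom (QuotientAddGroup.mk' H (v1, v2, v3)) = 1
    rw [hv]
    simp
  -- cross product identities
  have c1 : w1 • ((w1, w2, w3) : ℤ × ℤ × ℤ)
      = (s2 * t3 - s3 * t2) • cr (a, b, p) (c, d, q) := by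
    rw [← cr_smul s2 t2 s3 t3, hA2, hA3]
    simp only [cr, Prod.smul_mk, smul_eq_mul, Prod.mk.injEq]
    refine ⟨by ring, by ring, by ring⟩
  have c2 : w2 • ((w1, w2, w3) : ℤ × ℤ × ℤ)
      = (s3 * t1 - s1 * t3) • cr (a, b, p) (c, d, q) := by
    rw [← cr_smul s3 t3 s1 t1, hA3, hA1]
    simp only [cr, Prod.smul_mk, smul_eq_mul, Prod.mk.injEq]
    refine ⟨by ring, by ring, by ring⟩
  have c3 : w3 • ((w1, w2, w3) : ℤ × ℤ × ℤ)
      = (s1 * t2 - s2 * t1) • cr (a, b, p) (c, d, q) := by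
    rw [← cr_smul s1 t1 s2 t2, hA1, hA2]
    simp only [cr, Prod.smul_mk, smul_eq_mul, Prod.mk.injEq]
    refine ⟨by ring, by ring, by ring⟩
  simp only [cr, Prod.smul_mk, smul_eq_mul, Prod.mk.injEq] at c1 c2 c3
  obtain ⟨h11, h12, h13⟩ := c1
  obtain ⟨h21, h22, h23⟩ := c2
  obtain ⟨h31, h32, h33⟩ := c3
  have hKJ : (v1 * (s2 * t3 - s3 * t2) + v2 * (s3 * t1 - s1 * t3) + v3 * (s1 * t2 - s2 * t1))
      * (v1 * (b * q - p * d) + v2 * (p * c - a * q) + v3 * (a * d - b * c)) = 1 := by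
    linear_combination (v1 * w1 + v2 * w2 + v3 * w3 + 1) * hvw
      - v1 * v1 * h11 - v1 * v2 * h12 - v1 * v3 * h13
      - v2 * v1 * h21 - v2 * v2 * h22 - v2 * v3 * h23
      - v3 * v1 * h31 - v3 * v2 * h32 - v3 * v3 * h33
  set g : ℕ := Int.gcd (Int.gcd (a * d - b * c) (a * q - c * p)) (b * q - d * p) with hg
  have d1 : (g : ℤ) ∣ (a * d - b * c) :=
    dvd_trans (Int.gcd_dvd_left _ _) (Int.gcd_dvd_left _ _)
  have d2 : (g : ℤ) ∣ (a * q - c * p) :=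
    dvd_trans (Int.gcd_dvd_left _ _) (Int.gcd_dvd_right _ _)
  have d3 : (g : ℤ) ∣ (b * q - d * p) := Int.gcd_dvd_right _ _
  have hgJ : (g : ℤ) ∣ (v1 * (b * q - p * d) + v2 * (p * c - a * q) + v3 * (a * d - b * c)) := by
    have e3 : (b * q - p * d) = (b * q - d * p) := by ring
    have e2' : (p * c - a * q) = -(a * q - c * p) := by ring
    rw [e3, e2']
    exact dvd_add (dvd_add (d3.mul_left v1) ((d2.neg_right).mul_left v2)) (d1.mul_left v3)
  have hJ1 : (v1 * (b * q - p * d) + v2 * (p * c - a * q) + v3 * (a * d - b * c)) ∣ 1 :=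
    ⟨v1 * (s2 * t3 - s3 * t2) + v2 * (s3 * t1 - s1 * t3) + v3 * (s1 * t2 - s2 * t1),
      by linear_combination -hKJ⟩
  have hgd : (g : ℤ) ∣ 1 := dvd_trans hgJ hJ1
  exact Nat.dvd_one.mp (by exact_mod_cast hgd)

/-- `ℤ³/⟨(a,b,p),(c,d,q)⟩ ≅ ℤ` iff the gcd of the 2×2 minors equals 1. -/
theorem stmt_6 (a b p c d q : ℤ) :
    Nonempty (((ℤ × ℤ × ℤ) ⧸
        AddSubgroup.closure {((a, b, p) : ℤ × ℤ × ℤ), ((c, d, q) : ℤ × ℤ × ℤ)}) ≃+ ℤ) ↔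
      Int.gcd (Int.gcd (a * d - b * c) (a * q - c * p)) (b * q - d * p) = 1 := by
  constructor
  · exact fwd a b p c d q
  · intro hg
    have h1 : (↑(Int.gcd (a * d - b * c) (a * q - c * p)) : ℤ)
        = (a * d - b * c) * Int.gcdA (a * d - b * c) (a * q - c * p)
          + (a * q - c * p) * Int.gcdB (a * d - b * c) (a * q - c * p) :=
      Int.gcd_eq_gcd_ab _ _
    have h2 : (1 : ℤ)
        = (↑(Int.gcd (a * d - b * c) (a * q - c * p)) : ℤ)
            * Int.gcdA (↑(Int.gcd (a * d - b * c) (a * q - c * p))) (b * q - d * p)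
          + (b * q - d * p)
            * Int.gcdB (↑(Int.gcd (a * d - b * c) (a * q - c * p))) (b * q - d * p) := by
      have := Int.gcd_eq_gcd_ab (↑(Int.gcd (a * d - b * c) (a * q - c * p)) : ℤ) (b * q - d * p)
      rw [hg] at this
      exact_mod_cast this
    refine bwd a b p c d q
      (Int.gcdA (a * d - b * c) (a * q - c * p)
        * Int.gcdA (↑(Int.gcd (a * d - b * c) (a * q - c * p))) (b * q - d * p))
      (Int.gcdB (a * d - b * c) (a * q - c * p)
        * Int.gcdA (↑(Int.gcd (a * d - b * c) (a * q - c * p))) (b * q - d * p))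
      (Int.gcdB (↑(Int.gcd (a * d - b * c) (a * q - c * p))) (b * q - d * p)) ?_
    linear_combination -h2
      - Int.gcdA (↑(Int.gcd (a * d - b * c) (a * q - c * p)) : ℤ) (b * q - d * p) * h1
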